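/- (Noise-free online Sinkhorn converges.) Let α, β be probability measures on X and suppose the continuous functions f*, g* satisfy f* = T_β g* and g* = T_α f*. Let (η_t)_{t≥0} satisfy 0 ≤ η_t ≤ 1 and Σ_t η_t = ∞. Starting from continuous (f_0, g_0), define for each t ≥ 0: exp(−f_{t+1}) = (1 − η_t) exp(−f_t) + η_t exp(−T_β g_t) and exp(−g_{t+1}) = (1 − η_t) exp(−g_t) + η_t exp(−T_α f_t). Then ‖f_t − f*‖_var + ‖g_t − g*‖_var → 0 as t → ∞. -/

import Mathlib

open MeasureTheory Filter

/-- Soft C-transform: `(T_μ h)(x) = − log ∫ exp(h(y) − C(x, y)) dμ(y)`. -/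
noncomputable def softT {X : Type*} [MeasurableSpace X]
    (C : X × X → ℝ) (μ : Measure X) (h : X → ℝ) : X → ℝ :=
  fun x => - Real.log (∫ y, Real.exp (h y - C (x, y)) ∂μ)

/-- Variation norm: `‖f‖_var = sup f − inf f`. -/
noncomputable def varNorm {X : Type*} (f : X → ℝ) : ℝ :=
  (⨆ x, f x) - ⨅ x, f x


set_option linter.unusedSectionVars false
set_option linter.unusedVariables false
set_option maxHeartbeats 1000000


lemma rpow_le_lin {z t : ℝ} (hz : 0 ≤ z) (ht0 : 0 ≤ t) (ht1 : t ≤ 1) :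
    z ^ t ≤ t * z + (1 - t) := by
  have h := Real.geom_mean_le_arith_mean2_weighted (by linarith : (0:ℝ) ≤ 1 - t) ht0
    zero_le_one hz (by ring)
  simpa [Real.one_rpow] using h.trans_eq (by ring)

lemma scalar_key {θ B D : ℝ} (hθ0 : 0 < θ) (hθ1 : θ ≤ 1) (hB : 0 < B)
    (hD0 : 0 ≤ D) (hDB : D ≤ B) :
    θ + (1 - θ) * Real.exp D ≤ (θ + (1 - θ) * Real.exp B) ^ (D / B) := by
  set S : ℝ := θ + (1 - θ) * Real.exp B with hS
  set t : ℝ := D / B with htdef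
  have ht0 : 0 ≤ t := div_nonneg hD0 hB.le
  have ht1 : t ≤ 1 := (div_le_one hB).2 hDB
  have hE1 : (1:ℝ) ≤ Real.exp B := Real.one_le_exp hB.le
  have hS1 : (1:ℝ) ≤ S := by
    have : (1 - θ) * 1 ≤ (1 - θ) * Real.exp B :=
      mul_le_mul_of_nonneg_left hE1 (by linarith)
    simp only [hS]; nlinarith
  have hS0 : 0 < S := lt_of_lt_of_le one_pos hS1
  have hSt0 : 0 < S ^ t := Real.rpow_pos_of_pos hS0 t
  have hinv : S ^ t * (1 / S) ^ t = 1 := by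
    rw [← Real.mul_rpow hS0.le (by positivity)]
    rw [mul_one_div, div_self hS0.ne', Real.one_rpow]
  have hEB : S ^ t * (Real.exp B / S) ^ t = Real.exp D := by
    rw [← Real.mul_rpow hS0.le (by positivity), mul_div_cancel₀ _ hS0.ne']
    rw [← Real.exp_log (Real.exp_pos B), ← Real.exp_mul] at *
    rw [Real.log_exp, htdef]
    field_simp
  have hb1 : (1 / S) ^ t ≤ t * (1 / S) + (1 - t) := rpow_le_lin (by positivity) ht0 ht1
  have hb2 : (Real.exp B / S) ^ t ≤ t * (Real.exp B / S) + (1 - t) :=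
    rpow_le_lin (by positivity) ht0 ht1
  have key : θ + (1 - θ) * Real.exp D ≤
      S ^ t * (θ * (t * (1 / S) + (1 - t)) + (1 - θ) * (t * (Real.exp B / S) + (1 - t))) := by
    have e1 : θ + (1 - θ) * Real.exp D
        = θ * (S ^ t * (1 / S) ^ t) + (1 - θ) * (S ^ t * (Real.exp B / S) ^ t) := by
      rw [hinv, hEB]; ring
    rw [e1]
    have t1 : θ * (S ^ t * (1 / S) ^ t) ≤ θ * (S ^ t * (t * (1 / S) + (1 - t))) := by
      apply mul_le_mul_of_nonneg_left _ hθ0.le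
      exact mul_le_mul_of_nonneg_left hb1 hSt0.le
    have t2 : (1 - θ) * (S ^ t * (Real.exp B / S) ^ t)
        ≤ (1 - θ) * (S ^ t * (t * (Real.exp B / S) + (1 - t))) := by
      apply mul_le_mul_of_nonneg_left _ (by linarith)
      exact mul_le_mul_of_nonneg_left hb2 hSt0.le
    nlinarith [t1, t2]
  refine key.trans ?_
  have : θ * (t * (1 / S) + (1 - t)) + (1 - θ) * (t * (Real.exp B / S) + (1 - t)) = 1 := by
    field_simp
    ring
  rw [this, mul_one]

section VN
variable {X : Type*} [Nonempty X] {w : X → ℝ} {r : ℝ}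

lemma varNorm_le_of_pairs (hb : BddAbove (Set.range w)) (hb' : BddBelow (Set.range w))
    (h : ∀ x x', w x - w x' ≤ r) : varNorm w ≤ r := by
  have h1 : ∀ x, w x ≤ (⨅ x', w x') + r := by
    intro x
    have h2 : w x - r ≤ ⨅ x', w x' := le_ciInf (fun x' => by linarith [h x x'])
    linarith
  have h3 : (⨆ x, w x) ≤ (⨅ x', w x') + r := ciSup_le h1
  simp only [varNorm]; linarith

lemma pair_le_varNorm (hb : BddAbove (Set.range w)) (hb' : BddBelow (Set.range w))
    (x x' : X) : w x - w x' ≤ varNorm w := by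
  have h1 : w x ≤ ⨆ z, w z := le_ciSup hb x
  have h2 : (⨅ z, w z) ≤ w x' := ciInf_le hb' x'
  simp only [varNorm]; linarith

lemma varNorm_nonneg' (hb : BddAbove (Set.range w)) (hb' : BddBelow (Set.range w)) :
    0 ≤ varNorm w := by
  have := pair_le_varNorm hb hb' (Classical.arbitrary X) (Classical.arbitrary X)
  linarith

lemma iInf_le_apply (hb' : BddBelow (Set.range w)) (x : X) : (⨅ z, w z) ≤ w x := ciInf_le hb' x

lemma apply_le_iInf_add_varNorm (hb : BddAbove (Set.range w)) (x : X) :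
    w x ≤ (⨅ z, w z) + varNorm w := by
  have h1 : w x ≤ ⨆ z, w z := le_ciSup hb x
  simp only [varNorm]; linarith

end VN

lemma ratio_step {η ε M lam a b a' b' : ℝ} (hη0 : 0 ≤ η) (hη1 : η ≤ 1)
    (hε0 : 0 < ε) (ha : 0 < a) (hb : 0 < b)
    (hM : 0 ≤ M) (hlam : 0 ≤ lam) (hlam1 : lam ≤ 1)
    (ha' : a' ≤ Real.exp M * a) (hb' : b' ≤ Real.exp (lam * M) * b)
    (hbP : ε * ((1 - η) * a + η * b) ≤ b) :
    (1 - η) * a' + η * b'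
      ≤ ((1 - η * ε) * Real.exp M + η * ε * Real.exp (lam * M)) * ((1 - η) * a + η * b) := by
  have hee : Real.exp (lam * M) ≤ Real.exp M :=
    Real.exp_le_exp.2 (by nlinarith)
  have h1 : (1 - η) * a' ≤ (1 - η) * (Real.exp M * a) :=
    mul_le_mul_of_nonneg_left ha' (by linarith)
  have h2 : η * b' ≤ η * (Real.exp (lam * M) * b) :=
    mul_le_mul_of_nonneg_left hb' hη0
  have key : (1 - η) * (Real.exp M * a) + η * (Real.exp (lam * M) * b)
      ≤ ((1 - η * ε) * Real.exp M + η * ε * Real.exp (lam * M)) * ((1 - η) * a + η * b) := by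
    nlinarith [mul_nonneg hη0 (sub_nonneg.2 hee), sub_nonneg.2 hbP,
      mul_nonneg (mul_nonneg hη0 (sub_nonneg.2 hee)) (sub_nonneg.2 hbP)]
  linarith


section Lip
variable {X : Type*} [MetricSpace X] [CompactSpace X] [Nonempty X]
    [MeasurableSpace X] [BorelSpace X]
    {C : X × X → ℝ} (μ : Measure X) [IsProbabilityMeasure μ]

lemma cont_integrable' (μ : Measure X) [IsFiniteMeasure μ] {F : X → ℝ} (hF : Continuous F) :
    Integrable F μ :=
  hF.integrable_of_hasCompactSupport (HasCompactSupport.of_compactSpace F)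

lemma integral_exp_pos' (μ : Measure X) [IsProbabilityMeasure μ] {F : X → ℝ} (hF : Continuous F) :
    0 < ∫ y, Real.exp (F y) ∂μ := by
  obtain ⟨x0, -, hmin⟩ := isCompact_univ.exists_isMinOn Set.univ_nonempty
    ((Real.continuous_exp.comp hF).continuousOn)
  have h1 : ∀ y, Real.exp (F x0) ≤ Real.exp (F y) := fun y => hmin (Set.mem_univ y)
  have h2 : (∫ _ : X, Real.exp (F x0) ∂μ) ≤ ∫ y, Real.exp (F y) ∂μ :=
    integral_mono (integrable_const _) (cont_integrable' μ (Real.continuous_exp.comp hF)) h1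
  have h3 : (∫ _ : X, Real.exp (F x0) ∂μ) = Real.exp (F x0) := by simp [integral_const]
  linarith [Real.exp_pos (F x0)]

lemma softT_lip {L : ℝ} (hL : 0 ≤ L) (hC : LipschitzWith L.toNNReal C) {h : X → ℝ}
    (hh : Continuous h) : Continuous (softT C μ h) := by
  have hCc : Continuous C := hC.continuous
  have hIc : ∀ x : X, Continuous fun y => Real.exp (h y - C (x, y)) := fun x =>
    Real.continuous_exp.comp (hh.sub (hCc.comp (Continuous.prodMk_right x)))
  have hIpos : ∀ x : X, 0 < ∫ y, Real.exp (h y - C (x, y)) ∂μ := fun x =>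
    integral_exp_pos' μ (hh.sub (hCc.comp (Continuous.prodMk_right x)))
  have key : ∀ x x' : X, softT C μ h x - softT C μ h x' ≤ L * dist x x' := by
    intro x x'
    have hcd : ∀ y, C (x, y) - C (x', y) ≤ L * dist x x' := by
      intro y
      have h1 := hC.dist_le_mul (x, y) (x', y)
      rw [Prod.dist_eq] at h1
      simp only [dist_self, max_eq_left dist_nonneg] at h1
      have h2 : dist (C (x, y)) (C (x', y)) ≤ L * dist x x' := by
        calc dist (C (x, y)) (C (x', y)) ≤ (L.toNNReal : ℝ) * dist x x' := h1
        _ = L * dist x x' := by rw [Real.coe_toNNReal _ hL]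
      rw [Real.dist_eq] at h2
      exact (le_abs_self _).trans h2
    have hIle : (∫ y, Real.exp (h y - C (x', y)) ∂μ)
        ≤ Real.exp (L * dist x x') * ∫ y, Real.exp (h y - C (x, y)) ∂μ := by
      rw [← integral_const_mul]
      refine integral_mono (cont_integrable' μ (hIc x'))
        ((cont_integrable' μ (hIc x)).const_mul _) (fun y => ?_)
      rw [← Real.exp_add]
      exact Real.exp_le_exp.2 (by linarith [hcd y])
    have hlog := Real.log_le_log (hIpos x') hIle
    rw [Real.log_mul (Real.exp_ne_zero _) (hIpos x).ne', Real.log_exp] at hlog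
    simp only [softT]
    linarith
  have habs : ∀ x x' : X, dist (softT C μ h x) (softT C μ h x') ≤ (L.toNNReal : ℝ) * dist x x' := by
    intro x x'
    rw [Real.dist_eq, Real.coe_toNNReal _ hL]
    rw [abs_le]
    constructor
    · have := key x' x; rw [dist_comm x' x] at this; linarith
    · linarith [key x x']
  exact (LipschitzWith.of_dist_le_mul habs).continuous

end Lip

section Aux
variable {X : Type*} [MetricSpace X] [CompactSpace X] [Nonempty X]
    [MeasurableSpace X] [BorelSpace X]

lemma cont_integrable (μ : Measure X) [IsFiniteMeasure μ] {F : X → ℝ} (hF : Continuous F) :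
    Integrable F μ :=
  hF.integrable_of_hasCompactSupport (HasCompactSupport.of_compactSpace F)

lemma integral_exp_pos (μ : Measure X) [IsProbabilityMeasure μ] {F : X → ℝ} (hF : Continuous F) :
    0 < ∫ y, Real.exp (F y) ∂μ := by
  obtain ⟨x0, -, hmin⟩ := isCompact_univ.exists_isMinOn Set.univ_nonempty
    ((Real.continuous_exp.comp hF).continuousOn)
  have h1 : ∀ y, Real.exp (F x0) ≤ Real.exp (F y) := fun y => hmin (Set.mem_univ y)
  have h2 : (∫ _ : X, Real.exp (F x0) ∂μ) ≤ ∫ y, Real.exp (F y) ∂μ :=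
    integral_mono (integrable_const _) (cont_integrable μ (Real.continuous_exp.comp hF)) h1
  have h3 : (∫ _ : X, Real.exp (F x0) ∂μ) = Real.exp (F x0) := by
    simp [integral_const]
  linarith [Real.exp_pos (F x0)]

variable {C : X × X → ℝ} (hCc : Continuous C)
  (μ : Measure X) [IsProbabilityMeasure μ]

include hCc in
lemma conty (x : X) {h : X → ℝ} (hh : Continuous h) :
    Continuous fun y => Real.exp (h y - C (x, y)) :=
  Real.continuous_exp.comp (hh.sub (hCc.comp (Continuous.prodMk_right x)))

include hCc in
lemma integral_I_pos (x : X) {h : X → ℝ} (hh : Continuous h) :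
    0 < ∫ y, Real.exp (h y - C (x, y)) ∂μ :=
  integral_exp_pos μ (hh.sub (hCc.comp (Continuous.prodMk_right x)))

include hCc in
lemma softT_sub_le {h1 h2 : X → ℝ} (hh1 : Continuous h1) (hh2 : Continuous h2)
    {M : ℝ} (hM : ∀ y, h2 y - h1 y ≤ M) (x : X) :
    softT C μ h1 x - softT C μ h2 x ≤ M := by
  set J := ∫ y, Real.exp (h1 y - C (x, y)) ∂μ with hJdef
  set I := ∫ y, Real.exp (h2 y - C (x, y)) ∂μ with hIdef
  have hJ : 0 < J := integral_I_pos hCc μ x hh1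
  have hI : 0 < I := integral_I_pos hCc μ x hh2
  have hle : I ≤ Real.exp M * J := by
    rw [hIdef, hJdef, ← integral_const_mul]
    refine integral_mono (cont_integrable μ (conty (hCc := hCc) x hh2))
      ((cont_integrable μ (conty (hCc := hCc) x hh1)).const_mul _) (fun y => ?_)
    rw [← Real.exp_add]
    exact Real.exp_le_exp.2 (by linarith [hM y])
  have : Real.log I ≤ M + Real.log J := by
    calc Real.log I ≤ Real.log (Real.exp M * J) := Real.log_le_log hI hle
    _ = M + Real.log J := by rw [Real.log_mul (Real.exp_ne_zero M) hJ.ne', Real.log_exp]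
  simp only [softT, ← hJdef, ← hIdef]
  linarith

include hCc in
lemma le_softT_sub {h1 h2 : X → ℝ} (hh1 : Continuous h1) (hh2 : Continuous h2)
    {m : ℝ} (hm : ∀ y, m ≤ h2 y - h1 y) (x : X) :
    m ≤ softT C μ h1 x - softT C μ h2 x := by
  have := softT_sub_le hCc μ hh2 hh1 (M := -m) (fun y => by linarith [hm y]) x
  linarith

end Aux

section Aux2
variable {X : Type*} [MetricSpace X] [CompactSpace X] [Nonempty X]
    [MeasurableSpace X] [BorelSpace X]
variable {C : X × X → ℝ} (hCc : Continuous C)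
  (μ : Measure X) [IsProbabilityMeasure μ]

include hCc in
lemma softT_contraction {h1 h2 : X → ℝ} (hh1 : Continuous h1) (hh2 : Continuous h2)
    {R c D : ℝ} (hR : ∀ x x' y : X, C (x, y) - C (x', y) ≤ R)
    (hD : 0 ≤ D) (hlo : ∀ y, c ≤ h2 y - h1 y) (hhi : ∀ y, h2 y - h1 y ≤ c + D)
    (x x' : X) :
    (softT C μ h1 x - softT C μ h2 x) - (softT C μ h1 x' - softT C μ h2 x')
      ≤ Real.log (Real.exp (-(2*R)) + (1 - Real.exp (-(2*R))) * Real.exp D) := by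
  set θ := Real.exp (-(2*R)) with hθdef
  have hR0 : 0 ≤ R := by have := hR x x x; linarith
  have hθ0 : 0 < θ := Real.exp_pos _
  have hθ1 : θ ≤ 1 := Real.exp_le_one_iff.2 (by linarith)
  set Jx := ∫ y, Real.exp (h1 y - C (x, y)) ∂μ with hJx
  set Jx' := ∫ y, Real.exp (h1 y - C (x', y)) ∂μ with hJx'
  set Ix := ∫ y, Real.exp (h2 y - C (x, y)) ∂μ with hIx0
  set Ix' := ∫ y, Real.exp (h2 y - C (x', y)) ∂μ with hIx'0
  have hJxp : 0 < Jx := integral_I_pos hCc μ x hh1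
  have hJx'p : 0 < Jx' := integral_I_pos hCc μ x' hh1
  have hIxp : 0 < Ix := integral_I_pos hCc μ x hh2
  have hIx'p : 0 < Ix' := integral_I_pos hCc μ x' hh2
  have hJr : Jx ≤ Real.exp R * Jx' := by
    rw [hJx, hJx', ← integral_const_mul]
    refine integral_mono (cont_integrable μ (conty hCc x hh1))
      ((cont_integrable μ (conty hCc x' hh1)).const_mul _) (fun y => ?_)
    rw [← Real.exp_add]
    exact Real.exp_le_exp.2 (by linarith [hR x' x y])
  set k := θ * (Jx / Jx') with hkdef
  have hk0 : 0 < k := by positivity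
  have hkJ : k * Jx' = θ * Jx := by rw [hkdef, mul_assoc, div_mul_cancel₀ _ hJx'p.ne']
  have hkmax : k ≤ Real.exp (-R) := by
    have h1 : Jx / Jx' ≤ Real.exp R := (div_le_iff₀ hJx'p).2 hJr
    calc k ≤ θ * Real.exp R := mul_le_mul_of_nonneg_left h1 hθ0.le
    _ = Real.exp (-R) := by rw [hθdef, ← Real.exp_add]; ring_nf
  have hkey : ∀ y, k * Real.exp (h1 y - C (x', y)) ≤ Real.exp (h1 y - C (x, y)) := by
    intro y
    calc k * Real.exp (h1 y - C (x', y)) ≤ Real.exp (-R) * Real.exp (h1 y - C (x', y)) :=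
          mul_le_mul_of_nonneg_right hkmax (Real.exp_pos _).le
    _ = Real.exp (h1 y - C (x', y) - R) := by rw [← Real.exp_add]; ring_nf
    _ ≤ Real.exp (h1 y - C (x, y)) := Real.exp_le_exp.2 (by linarith [hR x x' y])
  -- split identity
  have hsplit : ∀ y, Real.exp (h2 y - C (x, y)) =
      k * Real.exp (h2 y - C (x', y)) +
        Real.exp (h2 y - h1 y) * (Real.exp (h1 y - C (x, y)) - k * Real.exp (h1 y - C (x', y))) := by
    intro y
    have e1 : Real.exp (h2 y - h1 y) * Real.exp (h1 y - C (x, y)) = Real.exp (h2 y - C (x, y)) := by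
      rw [← Real.exp_add]; ring_nf
    have e2 : Real.exp (h2 y - h1 y) * Real.exp (h1 y - C (x', y)) = Real.exp (h2 y - C (x', y)) := by
      rw [← Real.exp_add]; ring_nf
    rw [mul_sub, e1]
    rw [show Real.exp (h2 y - h1 y) * (k * Real.exp (h1 y - C (x', y)))
        = k * (Real.exp (h2 y - h1 y) * Real.exp (h1 y - C (x', y))) by ring, e2]
    ring
  have hIsplit : Ix = k * Ix' + ∫ y, Real.exp (h2 y - h1 y) *
      (Real.exp (h1 y - C (x, y)) - k * Real.exp (h1 y - C (x', y))) ∂μ := by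
    rw [hIx0]
    rw [integral_congr_ae (Filter.Eventually.of_forall hsplit)]
    rw [integral_add (((cont_integrable μ (conty hCc x' hh2)).const_mul k))
      (by
        apply cont_integrable μ
        exact (Real.continuous_exp.comp (hh2.sub hh1)).mul
          ((conty hCc x hh1).sub (continuous_const.mul (conty hCc x' hh1))))]
    rw [integral_const_mul]
  have hrest : (∫ y, Real.exp (h2 y - h1 y) *
      (Real.exp (h1 y - C (x, y)) - k * Real.exp (h1 y - C (x', y))) ∂μ)
      ≤ Real.exp (c + D) * (Jx - k * Jx') := by
    have hmono : ∀ y, Real.exp (h2 y - h1 y) *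
        (Real.exp (h1 y - C (x, y)) - k * Real.exp (h1 y - C (x', y)))
        ≤ Real.exp (c + D) * (Real.exp (h1 y - C (x, y)) - k * Real.exp (h1 y - C (x', y))) := by
      intro y
      exact mul_le_mul_of_nonneg_right (Real.exp_le_exp.2 (hhi y)) (by linarith [hkey y])
    calc (∫ y, Real.exp (h2 y - h1 y) *
        (Real.exp (h1 y - C (x, y)) - k * Real.exp (h1 y - C (x', y))) ∂μ)
        ≤ ∫ y, Real.exp (c + D) * (Real.exp (h1 y - C (x, y)) - k * Real.exp (h1 y - C (x', y))) ∂μ := by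
          refine integral_mono (by
            apply cont_integrable μ
            exact (Real.continuous_exp.comp (hh2.sub hh1)).mul
              ((conty hCc x hh1).sub (continuous_const.mul (conty hCc x' hh1))))
            (by
              apply Integrable.const_mul
              exact (cont_integrable μ ((conty hCc x hh1).sub (continuous_const.mul (conty hCc x' hh1)))))
            hmono
    _ = Real.exp (c + D) * (Jx - k * Jx') := by
          rw [integral_const_mul, integral_sub (cont_integrable μ (conty hCc x hh1))
            ((cont_integrable μ (conty hCc x' hh1)).const_mul k), integral_const_mul]
  have hIc : Real.exp c * Jx' ≤ Ix' := by
    rw [hIx'0, hJx', ← integral_const_mul]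
    refine integral_mono ((cont_integrable μ (conty hCc x' hh1)).const_mul _)
      (cont_integrable μ (conty hCc x' hh2)) (fun y => ?_)
    rw [← Real.exp_add]
    exact Real.exp_le_exp.2 (by linarith [hlo y])
  set Q := θ + (1 - θ) * Real.exp D with hQdef
  have hQ0 : 0 < Q := by nlinarith [Real.exp_pos D]
  have hprod : Ix * Jx' ≤ Q * (Jx * Ix') := by
    have hIxle : Ix ≤ k * Ix' + Real.exp (c + D) * ((1 - θ) * Jx) := by
      have : Jx - k * Jx' = (1 - θ) * Jx := by rw [hkJ]; ring
      calc Ix ≤ k * Ix' + Real.exp (c + D) * (Jx - k * Jx') := by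
            rw [hIsplit]; linarith [hrest]
      _ = k * Ix' + Real.exp (c + D) * ((1 - θ) * Jx) := by rw [this]
    have step1 : Ix * Jx' ≤ θ * Jx * Ix' + (1 - θ) * Real.exp D * Jx * (Real.exp c * Jx') := by
      have e3 : Real.exp (c + D) = Real.exp c * Real.exp D := Real.exp_add c D
      have := mul_le_mul_of_nonneg_right hIxle hJx'p.le
      calc Ix * Jx' ≤ (k * Ix' + Real.exp (c + D) * ((1 - θ) * Jx)) * Jx' := this
      _ = (k * Jx') * Ix' + (1 - θ) * Real.exp D * Jx * (Real.exp c * Jx') := by rw [e3]; ring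
      _ = θ * Jx * Ix' + (1 - θ) * Real.exp D * Jx * (Real.exp c * Jx') := by rw [hkJ]
    have step2 : (1 - θ) * Real.exp D * Jx * (Real.exp c * Jx')
        ≤ (1 - θ) * Real.exp D * Jx * Ix' :=
      mul_le_mul_of_nonneg_left hIc (mul_nonneg (mul_nonneg (by linarith : (0:ℝ) ≤ 1 - θ) (Real.exp_pos D).le) hJxp.le)
    calc Ix * Jx' ≤ θ * Jx * Ix' + (1 - θ) * Real.exp D * Jx * Ix' := by linarith
    _ = Q * (Jx * Ix') := by rw [hQdef]; ring
  have hlogs := Real.log_le_log (mul_pos hIxp hJx'p) hprod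
  rw [Real.log_mul hIxp.ne' hJx'p.ne',
    Real.log_mul hQ0.ne' (mul_pos hJxp hIx'p).ne',
    Real.log_mul hJxp.ne' hIx'p.ne'] at hlogs
  simp only [softT, ← hJx, ← hJx', ← hIx0, ← hIx'0]
  linarith
end Aux2

/-- Noise-free online Sinkhorn converges: with step sizes `η_t ∈ [0,1]`, `Σ η_t = ∞`,
the iterates defined by `exp(−f_{t+1}) = (1−η_t) exp(−f_t) + η_t exp(−T_β g_t)` and
`exp(−g_{t+1}) = (1−η_t) exp(−g_t) + η_t exp(−T_α f_t)` satisfy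
`‖f_t − f*‖_var + ‖g_t − g*‖_var → 0`. -/
theorem noise_free_online_sinkhorn_converges
    {X : Type*} [MetricSpace X] [CompactSpace X] [Nonempty X]
    [MeasurableSpace X] [BorelSpace X]
    (L : ℝ) (hL : 0 < L) (C : X × X → ℝ) (hC : LipschitzWith L.toNNReal C)
    (α β : Measure X) [IsProbabilityMeasure α] [IsProbabilityMeasure β]
    (fs gs : X → ℝ) (hfs : Continuous fs) (hgs : Continuous gs)
    (hfix1 : fs = softT C β gs) (hfix2 : gs = softT C α fs)
    (η : ℕ → ℝ) (hη0 : ∀ t, 0 ≤ η t) (hη1 : ∀ t, η t ≤ 1)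
    (hdiv : ¬ Summable η)
    (f g : ℕ → X → ℝ) (hf0 : Continuous (f 0)) (hg0 : Continuous (g 0))
    (hfrec : ∀ t x, Real.exp (-(f (t + 1) x)) =
      (1 - η t) * Real.exp (-(f t x)) + η t * Real.exp (-(softT C β (g t) x)))
    (hgrec : ∀ t x, Real.exp (-(g (t + 1) x)) =
      (1 - η t) * Real.exp (-(g t x)) + η t * Real.exp (-(softT C α (f t) x))) :
    Tendsto (fun t =>
        varNorm (fun x => f t x - fs x) + varNorm (fun x => g t x - gs x))
      atTop (nhds 0) := by
  classical
  have hCc : Continuous C := hC.continuous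
  -- continuity of the iterates
  have hcont : ∀ t, Continuous (f t) ∧ Continuous (g t) := by
    intro t
    induction t with
    | zero => exact ⟨hf0, hg0⟩
    | succ t ih =>
      obtain ⟨hft, hgt⟩ := ih
      have hTg : Continuous (softT C β (g t)) := softT_lip β hL.le hC hgt
      have hTf : Continuous (softT C α (f t)) := softT_lip α hL.le hC hft
      constructor
      · have hfe : f (t+1) = fun x => -Real.log ((1 - η t) * Real.exp (-(f t x))
            + η t * Real.exp (-(softT C β (g t) x))) := by
          funext x
          rw [← hfrec t x, Real.log_exp, neg_neg]
        rw [hfe]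
        refine (Continuous.log ?_ ?_).neg
        · exact (continuous_const.mul (Real.continuous_exp.comp hft.neg)).add
            (continuous_const.mul (Real.continuous_exp.comp hTg.neg))
        · intro x; rw [← hfrec t x]; exact (Real.exp_pos _).ne'
      · have hge : g (t+1) = fun x => -Real.log ((1 - η t) * Real.exp (-(g t x))
            + η t * Real.exp (-(softT C α (f t) x))) := by
          funext x
          rw [← hgrec t x, Real.log_exp, neg_neg]
        rw [hge]
        refine (Continuous.log ?_ ?_).neg
        · exact (continuous_const.mul (Real.continuous_exp.comp hgt.neg)).add
            (continuous_const.mul (Real.continuous_exp.comp hTf.neg))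
        · intro x; rw [← hgrec t x]; exact (Real.exp_pos _).ne'
  -- the key exponential identities
  have hidf : ∀ t x, Real.exp (-(f (t+1) x - fs x)) =
      (1 - η t) * Real.exp (-(f t x - fs x))
        + η t * Real.exp (softT C β gs x - softT C β (g t) x) := by
    intro t x
    have hfsx : fs x = softT C β gs x := by rw [hfix1]
    have e0 : Real.exp (-(f (t+1) x - fs x)) = Real.exp (-(f (t+1) x)) * Real.exp (fs x) := by
      rw [← Real.exp_add]; ring_nf
    have e1 : Real.exp (-(f t x)) * Real.exp (fs x) = Real.exp (-(f t x - fs x)) := by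
      rw [← Real.exp_add]; ring_nf
    have e2 : Real.exp (-(softT C β (g t) x)) * Real.exp (fs x)
        = Real.exp (softT C β gs x - softT C β (g t) x) := by
      rw [← Real.exp_add, ← hfsx]; ring_nf
    rw [e0, hfrec t x, add_mul, mul_assoc, mul_assoc, e1, e2]
  have hidg : ∀ t x, Real.exp (-(g (t+1) x - gs x)) =
      (1 - η t) * Real.exp (-(g t x - gs x))
        + η t * Real.exp (softT C α fs x - softT C α (f t) x) := by
    intro t x
    have hgsx : gs x = softT C α fs x := by rw [hfix2]
    have e0 : Real.exp (-(g (t+1) x - gs x)) = Real.exp (-(g (t+1) x)) * Real.exp (gs x) := by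
      rw [← Real.exp_add]; ring_nf
    have e1 : Real.exp (-(g t x)) * Real.exp (gs x) = Real.exp (-(g t x - gs x)) := by
      rw [← Real.exp_add]; ring_nf
    have e2 : Real.exp (-(softT C α (f t) x)) * Real.exp (gs x)
        = Real.exp (softT C α fs x - softT C α (f t) x) := by
      rw [← Real.exp_add, ← hgsx]; ring_nf
    rw [e0, hgrec t x, add_mul, mul_assoc, mul_assoc, e1, e2]
  -- initial bound
  obtain ⟨xf, -, hxf⟩ := isCompact_univ.exists_isMaxOn Set.univ_nonempty
    ((hf0.sub hfs).abs.continuousOn)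
  obtain ⟨xg, -, hxg⟩ := isCompact_univ.exists_isMaxOn Set.univ_nonempty
    ((hg0.sub hgs).abs.continuousOn)
  set K : ℝ := max 1 (max (|f 0 xf - fs xf|) (|g 0 xg - gs xg|)) with hKdef
  have hK1 : (1:ℝ) ≤ K := le_max_left _ _
  have hK0 : (0:ℝ) < K := by linarith
  have hKf0 : ∀ x, |f 0 x - fs x| ≤ K := fun x =>
    le_trans (hxf (Set.mem_univ x)) (le_max_of_le_right (le_max_left _ _))
  have hKg0 : ∀ x, |g 0 x - gs x| ≤ K := fun x =>
    le_trans (hxg (Set.mem_univ x)) (le_max_of_le_right (le_max_right _ _))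
  -- uniform bound by induction
  have hbd : ∀ t, (∀ x, |f t x - fs x| ≤ K) ∧ (∀ x, |g t x - gs x| ≤ K) := by
    intro t
    induction t with
    | zero => exact ⟨hKf0, hKg0⟩
    | succ t ih =>
      obtain ⟨ihf, ihg⟩ := ih
      have hft := (hcont t).1
      have hgt := (hcont t).2
      constructor
      · intro x
        have hsu : softT C β gs x - softT C β (g t) x ≤ K :=
          softT_sub_le hCc β hgs hgt (fun y => by linarith [(abs_le.1 (ihg y)).2]) x
        have hsl : -K ≤ softT C β gs x - softT C β (g t) x :=
          le_softT_sub hCc β hgs hgt (fun y => by linarith [(abs_le.1 (ihg y)).1]) x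
        have b1u : Real.exp (-(f t x - fs x)) ≤ Real.exp K :=
          Real.exp_le_exp.2 (by linarith [(abs_le.1 (ihf x)).1])
        have b1l : Real.exp (-K) ≤ Real.exp (-(f t x - fs x)) :=
          Real.exp_le_exp.2 (by linarith [(abs_le.1 (ihf x)).2])
        have b2u : Real.exp (softT C β gs x - softT C β (g t) x) ≤ Real.exp K :=
          Real.exp_le_exp.2 hsu
        have b2l : Real.exp (-K) ≤ Real.exp (softT C β gs x - softT C β (g t) x) :=
          Real.exp_le_exp.2 hsl
        have hub : Real.exp (-(f (t+1) x - fs x)) ≤ Real.exp K := by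
          rw [hidf t x]; nlinarith [hη0 t, hη1 t]
        have hlb : Real.exp (-K) ≤ Real.exp (-(f (t+1) x - fs x)) := by
          rw [hidf t x]; nlinarith [hη0 t, hη1 t]
        rw [abs_le]
        constructor
        · linarith [Real.exp_le_exp.1 hub]
        · linarith [Real.exp_le_exp.1 hlb]
      · intro x
        have hsu : softT C α fs x - softT C α (f t) x ≤ K :=
          softT_sub_le hCc α hfs hft (fun y => by linarith [(abs_le.1 (ihf y)).2]) x
        have hsl : -K ≤ softT C α fs x - softT C α (f t) x :=
          le_softT_sub hCc α hfs hft (fun y => by linarith [(abs_le.1 (ihf y)).1]) x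
        have b1u : Real.exp (-(g t x - gs x)) ≤ Real.exp K :=
          Real.exp_le_exp.2 (by linarith [(abs_le.1 (ihg x)).1])
        have b1l : Real.exp (-K) ≤ Real.exp (-(g t x - gs x)) :=
          Real.exp_le_exp.2 (by linarith [(abs_le.1 (ihg x)).2])
        have b2u : Real.exp (softT C α fs x - softT C α (f t) x) ≤ Real.exp K :=
          Real.exp_le_exp.2 hsu
        have b2l : Real.exp (-K) ≤ Real.exp (softT C α fs x - softT C α (f t) x) :=
          Real.exp_le_exp.2 hsl
        have hub : Real.exp (-(g (t+1) x - gs x)) ≤ Real.exp K := by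
          rw [hidg t x]; nlinarith [hη0 t, hη1 t]
        have hlb : Real.exp (-K) ≤ Real.exp (-(g (t+1) x - gs x)) := by
          rw [hidg t x]; nlinarith [hη0 t, hη1 t]
        rw [abs_le]
        constructor
        · linarith [Real.exp_le_exp.1 hub]
        · linarith [Real.exp_le_exp.1 hlb]
  -- bddness of ranges
  have hbau : ∀ t, BddAbove (Set.range (fun x => f t x - fs x)) := fun t =>
    ⟨K, by rintro z ⟨x, rfl⟩; exact (abs_le.1 ((hbd t).1 x)).2⟩
  have hbbu : ∀ t, BddBelow (Set.range (fun x => f t x - fs x)) := fun t =>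
    ⟨-K, by rintro z ⟨x, rfl⟩; exact (abs_le.1 ((hbd t).1 x)).1⟩
  have hbav : ∀ t, BddAbove (Set.range (fun x => g t x - gs x)) := fun t =>
    ⟨K, by rintro z ⟨x, rfl⟩; exact (abs_le.1 ((hbd t).2 x)).2⟩
  have hbbv : ∀ t, BddBelow (Set.range (fun x => g t x - gs x)) := fun t =>
    ⟨-K, by rintro z ⟨x, rfl⟩; exact (abs_le.1 ((hbd t).2 x)).1⟩
  set A : ℕ → ℝ := fun t => varNorm (fun x => f t x - fs x) with hA
  set Bv : ℕ → ℝ := fun t => varNorm (fun x => g t x - gs x) with hBv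
  have hA0 : ∀ t, 0 ≤ A t := fun t => varNorm_nonneg' (hbau t) (hbbu t)
  have hB0 : ∀ t, 0 ≤ Bv t := fun t => varNorm_nonneg' (hbav t) (hbbv t)
  have hA2K : ∀ t, A t ≤ 2*K := fun t => varNorm_le_of_pairs (hbau t) (hbbu t)
    (fun x x' => by linarith [(abs_le.1 ((hbd t).1 x)).2, (abs_le.1 ((hbd t).1 x')).1])
  have hB2K : ∀ t, Bv t ≤ 2*K := fun t => varNorm_le_of_pairs (hbav t) (hbbv t)
    (fun x x' => by linarith [(abs_le.1 ((hbd t).2 x)).2, (abs_le.1 ((hbd t).2 x')).1])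
  -- constants
  obtain ⟨p0, -, hp0⟩ := isCompact_univ.exists_isMaxOn Set.univ_nonempty hCc.abs.continuousOn
  set R : ℝ := 2 * |C p0| with hRdef
  have hRb : ∀ x x' y : X, C (x, y) - C (x', y) ≤ R := by
    intro x x' y
    have h1 : |C (x, y)| ≤ |C p0| := hp0 (Set.mem_univ (x, y))
    have h2 : |C (x', y)| ≤ |C p0| := hp0 (Set.mem_univ (x', y))
    simp only [hRdef]
    have h3 := le_abs_self (C (x, y))
    have h4 := neg_abs_le (C (x', y))
    linarith
  have hR0 : 0 ≤ R := by
    have := hRb (Classical.arbitrary X) (Classical.arbitrary X) (Classical.arbitrary X)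
    linarith
  set θ : ℝ := Real.exp (-(2*R)) with hθdef
  have hθ0 : 0 < θ := Real.exp_pos _
  have hθ1 : θ ≤ 1 := Real.exp_le_one_iff.2 (by linarith)
  set B2 : ℝ := 2*K with hB2def
  have hB2 : 0 < B2 := by simp only [hB2def]; linarith
  set S : ℝ := θ + (1-θ) * Real.exp B2 with hSdef
  have hS1 : 1 ≤ S := by nlinarith [Real.one_le_exp hB2.le]
  have hS0 : 0 < S := by linarith
  have hexpB2 : (1:ℝ) < Real.exp B2 := by
    have := Real.exp_lt_exp.2 hB2
    rwa [Real.exp_zero] at this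
  have hSeB : S < Real.exp B2 := by nlinarith
  set lam : ℝ := Real.log S / B2 with hlamdef
  have hlam0 : 0 ≤ lam := div_nonneg (Real.log_nonneg hS1) hB2.le
  have hlam1 : lam < 1 := by
    rw [hlamdef, div_lt_one hB2]
    calc Real.log S < Real.log (Real.exp B2) := Real.log_lt_log hS0 hSeB
    _ = B2 := Real.log_exp _
  have hscal : ∀ D : ℝ, 0 ≤ D → D ≤ B2 → Real.log (θ + (1-θ) * Real.exp D) ≤ lam * D := by
    intro D hD0 hDB
    have h1 := scalar_key hθ0 hθ1 hB2 hD0 hDB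
    have hpos : 0 < θ + (1-θ) * Real.exp D := by nlinarith [Real.exp_pos D]
    have h2 := Real.log_le_log hpos h1
    rw [Real.log_rpow hS0] at h2
    calc Real.log (θ + (1-θ) * Real.exp D) ≤ D / B2 * Real.log S := h2
    _ = lam * D := by rw [hlamdef]; ring
  -- contraction bounds
  have hcontrB : ∀ (t : ℕ) (x x' : X),
      (softT C β gs x - softT C β (g t) x) - (softT C β gs x' - softT C β (g t) x')
        ≤ lam * Bv t := by
    intro t x x'
    have h1 := softT_contraction hCc β hgs (hcont t).2 hRb (hB0 t)
      (fun y => iInf_le_apply (hbbv t) y) (fun y => apply_le_iInf_add_varNorm (hbav t) y) x x'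
    exact h1.trans (hscal _ (hB0 t) (hB2K t))
  have hcontrA : ∀ (t : ℕ) (x x' : X),
      (softT C α fs x - softT C α (f t) x) - (softT C α fs x' - softT C α (f t) x')
        ≤ lam * A t := by
    intro t x x'
    have h1 := softT_contraction hCc α hfs (hcont t).1 hRb (hA0 t)
      (fun y => iInf_le_apply (hbbu t) y) (fun y => apply_le_iInf_add_varNorm (hbau t) y) x x'
    exact h1.trans (hscal _ (hA0 t) (hA2K t))
  -- main quantities
  set M : ℕ → ℝ := fun t => max (A t) (Bv t) with hMdef
  have hM0 : ∀ t, 0 ≤ M t := fun t => le_trans (hA0 t) (le_max_left _ _)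
  have hM2K : ∀ t, M t ≤ B2 := fun t => max_le (hA2K t) (hB2K t)
  set ε : ℝ := Real.exp (-B2) with hεdef
  have hε0 : 0 < ε := Real.exp_pos _
  have hε1 : ε ≤ 1 := Real.exp_le_one_iff.2 (by linarith)
  have hstep : ∀ t, M (t+1) ≤ Real.log ((1 - η t * ε) * Real.exp (M t)
      + η t * ε * Real.exp (lam * M t)) := by
    intro t
    have hlamM : lam * M t ≤ M t := by nlinarith [hM0 t]
    have helam : Real.exp (lam * M t) ≤ Real.exp (M t) := Real.exp_le_exp.2 hlamM
    have hηε1 : η t * ε ≤ 1 := mul_le_one₀ (hη1 t) hε0.le hε1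
    have hηε0 : 0 ≤ η t * ε := mul_nonneg (hη0 t) hε0.le
    set W : ℝ := (1 - η t * ε) * Real.exp (M t) + η t * ε * Real.exp (lam * M t) with hWdef
    have hW0 : 0 < W := by nlinarith [Real.exp_pos (lam * M t), Real.exp_pos (M t)]
    have hApart : A (t+1) ≤ Real.log W := by
      refine varNorm_le_of_pairs (hbau (t+1)) (hbbu (t+1)) (fun x x' => ?_)
      show (f (t+1) x - fs x) - (f (t+1) x' - fs x') ≤ Real.log W
      rw [Real.le_log_iff_exp_le hW0]
      set a : ℝ := Real.exp (-(f t x - fs x)) with hadef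
      set b : ℝ := Real.exp (softT C β gs x - softT C β (g t) x) with hbdef
      set a' : ℝ := Real.exp (-(f t x' - fs x')) with ha'def
      set b' : ℝ := Real.exp (softT C β gs x' - softT C β (g t) x') with hb'def
      have ha0 : 0 < a := Real.exp_pos _
      have hb0 : 0 < b := Real.exp_pos _
      have hP : Real.exp (-(f (t+1) x - fs x)) = (1 - η t) * a + η t * b := hidf t x
      have hP' : Real.exp (-(f (t+1) x' - fs x')) = (1 - η t) * a' + η t * b' := hidf t x'
      have ha' : a' ≤ Real.exp (M t) * a := by
        rw [ha'def, hadef, ← Real.exp_add]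
        apply Real.exp_le_exp.2
        have hpair : (f t x - fs x) - (f t x' - fs x') ≤ A t :=
          pair_le_varNorm (hbau t) (hbbu t) x x'
        have hAM : A t ≤ M t := le_max_left _ _
        linarith
      have hb' : b' ≤ Real.exp (lam * M t) * b := by
        rw [hb'def, hbdef, ← Real.exp_add]
        apply Real.exp_le_exp.2
        have h1 := hcontrB t x' x
        have h2 : lam * Bv t ≤ lam * M t := mul_le_mul_of_nonneg_left (le_max_right _ _) hlam0
        linarith
      have hbeb : ε * ((1 - η t) * a + η t * b) ≤ b := by
        have h1 : Real.exp (-(f (t+1) x - fs x)) ≤ Real.exp K :=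
          Real.exp_le_exp.2 (by linarith [(abs_le.1 ((hbd (t+1)).1 x)).1])
        have h2 : Real.exp (-K) ≤ b := by
          rw [hbdef]
          apply Real.exp_le_exp.2
          exact le_softT_sub hCc β hgs (hcont t).2
            (fun y => by linarith [(abs_le.1 ((hbd t).2 y)).1]) x
        have h3 : ε * Real.exp K = Real.exp (-K) := by
          rw [hεdef, hB2def, ← Real.exp_add]; congr 1; ring
        calc ε * ((1 - η t) * a + η t * b)
            = ε * Real.exp (-(f (t+1) x - fs x)) := by rw [hP]
        _ ≤ ε * Real.exp K := mul_le_mul_of_nonneg_left h1 hε0.le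
        _ = Real.exp (-K) := h3
        _ ≤ b := h2
      have hmain := ratio_step (hη0 t) (hη1 t) hε0 ha0 hb0 (hM0 t) hlam0 hlam1.le ha' hb' hbeb
      have hPx0 : 0 < Real.exp (-(f (t+1) x - fs x)) := Real.exp_pos _
      have hquot : Real.exp ((f (t+1) x - fs x) - (f (t+1) x' - fs x'))
          * Real.exp (-(f (t+1) x - fs x)) = Real.exp (-(f (t+1) x' - fs x')) := by
        rw [← Real.exp_add]; congr 1; ring
      have hfin : Real.exp ((f (t+1) x - fs x) - (f (t+1) x' - fs x'))
          * Real.exp (-(f (t+1) x - fs x)) ≤ W * Real.exp (-(f (t+1) x - fs x)) := by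
        rw [hquot, hP', hP]; exact hmain
      exact le_of_mul_le_mul_right hfin hPx0
    have hBpart : Bv (t+1) ≤ Real.log W := by
      refine varNorm_le_of_pairs (hbav (t+1)) (hbbv (t+1)) (fun x x' => ?_)
      show (g (t+1) x - gs x) - (g (t+1) x' - gs x') ≤ Real.log W
      rw [Real.le_log_iff_exp_le hW0]
      set a : ℝ := Real.exp (-(g t x - gs x)) with hadef
      set b : ℝ := Real.exp (softT C α fs x - softT C α (f t) x) with hbdef
      set a' : ℝ := Real.exp (-(g t x' - gs x')) with ha'def
      set b' : ℝ := Real.exp (softT C α fs x' - softT C α (f t) x') with hb'def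
      have ha0 : 0 < a := Real.exp_pos _
      have hb0 : 0 < b := Real.exp_pos _
      have hP : Real.exp (-(g (t+1) x - gs x)) = (1 - η t) * a + η t * b := hidg t x
      have hP' : Real.exp (-(g (t+1) x' - gs x')) = (1 - η t) * a' + η t * b' := hidg t x'
      have ha' : a' ≤ Real.exp (M t) * a := by
        rw [ha'def, hadef, ← Real.exp_add]
        apply Real.exp_le_exp.2
        have hpair : (g t x - gs x) - (g t x' - gs x') ≤ Bv t :=
          pair_le_varNorm (hbav t) (hbbv t) x x'
        have hBM : Bv t ≤ M t := le_max_right _ _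
        linarith
      have hb' : b' ≤ Real.exp (lam * M t) * b := by
        rw [hb'def, hbdef, ← Real.exp_add]
        apply Real.exp_le_exp.2
        have h1 := hcontrA t x' x
        have h2 : lam * A t ≤ lam * M t := mul_le_mul_of_nonneg_left (le_max_left _ _) hlam0
        linarith
      have hbeb : ε * ((1 - η t) * a + η t * b) ≤ b := by
        have h1 : Real.exp (-(g (t+1) x - gs x)) ≤ Real.exp K :=
          Real.exp_le_exp.2 (by linarith [(abs_le.1 ((hbd (t+1)).2 x)).1])
        have h2 : Real.exp (-K) ≤ b := by
          rw [hbdef]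
          apply Real.exp_le_exp.2
          exact le_softT_sub hCc α hfs (hcont t).1
            (fun y => by linarith [(abs_le.1 ((hbd t).1 y)).1]) x
        have h3 : ε * Real.exp K = Real.exp (-K) := by
          rw [hεdef, hB2def, ← Real.exp_add]; congr 1; ring
        calc ε * ((1 - η t) * a + η t * b)
            = ε * Real.exp (-(g (t+1) x - gs x)) := by rw [hP]
        _ ≤ ε * Real.exp K := mul_le_mul_of_nonneg_left h1 hε0.le
        _ = Real.exp (-K) := h3
        _ ≤ b := h2
      have hmain := ratio_step (hη0 t) (hη1 t) hε0 ha0 hb0 (hM0 t) hlam0 hlam1.le ha' hb' hbeb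
      have hPx0 : 0 < Real.exp (-(g (t+1) x - gs x)) := Real.exp_pos _
      have hquot : Real.exp ((g (t+1) x - gs x) - (g (t+1) x' - gs x'))
          * Real.exp (-(g (t+1) x - gs x)) = Real.exp (-(g (t+1) x' - gs x')) := by
        rw [← Real.exp_add]; congr 1; ring
      have hfin : Real.exp ((g (t+1) x - gs x) - (g (t+1) x' - gs x'))
          * Real.exp (-(g (t+1) x - gs x)) ≤ W * Real.exp (-(g (t+1) x - gs x)) := by
        rw [hquot, hP', hP]; exact hmain
      exact le_of_mul_le_mul_right hfin hPx0
    exact max_le hApart hBpart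
  -- monotonicity
  have hmono : ∀ t, M (t+1) ≤ M t := by
    intro t
    have hlamM : lam * M t ≤ M t := by nlinarith [hM0 t]
    have helam : Real.exp (lam * M t) ≤ Real.exp (M t) := Real.exp_le_exp.2 hlamM
    have hηε1 : η t * ε ≤ 1 := mul_le_one₀ (hη1 t) hε0.le hε1
    have hηε0 : 0 ≤ η t * ε := mul_nonneg (hη0 t) hε0.le
    have hW0 : 0 < (1 - η t * ε) * Real.exp (M t) + η t * ε * Real.exp (lam * M t) := by
      nlinarith [Real.exp_pos (lam * M t), Real.exp_pos (M t)]
    have hWle : (1 - η t * ε) * Real.exp (M t) + η t * ε * Real.exp (lam * M t)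
        ≤ Real.exp (M t) := by nlinarith
    calc M (t+1) ≤ Real.log ((1 - η t * ε) * Real.exp (M t)
        + η t * ε * Real.exp (lam * M t)) := hstep t
    _ ≤ Real.log (Real.exp (M t)) := Real.log_le_log hW0 hWle
    _ = M t := Real.log_exp _
  have hanti : Antitone M := antitone_nat_of_succ_le hmono
  have hbb : BddBelow (Set.range M) := ⟨0, by rintro z ⟨t, rfl⟩; exact hM0 t⟩
  have htend : Tendsto M atTop (nhds (⨅ t, M t)) := tendsto_atTop_ciInf hanti hbb
  set c : ℝ := ⨅ t, M t with hcdef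
  have hc0 : 0 ≤ c := le_ciInf hM0
  have hceq : c = 0 := by
    by_contra hne
    have hcp : 0 < c := lt_of_le_of_ne hc0 (Ne.symm hne)
    have h1lam : 0 < 1 - lam := by linarith
    set ρ : ℝ := ε * ((1 - lam) * c) * ε with hρdef
    have hρ0 : 0 < ρ := mul_pos (mul_pos hε0 (mul_pos h1lam hcp)) hε0
    have hdec : ∀ t, M (t+1) ≤ M t - η t * ρ := by
      intro t
      have hcM : c ≤ M t := ciInf_le hbb t
      have hlamM : lam * M t ≤ M t := by nlinarith [hM0 t]
      have helam : Real.exp (lam * M t) ≤ Real.exp (M t) := Real.exp_le_exp.2 hlamM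
      have hηε1 : η t * ε ≤ 1 := mul_le_one₀ (hη1 t) hε0.le hε1
      have hηε0 : 0 ≤ η t * ε := mul_nonneg (hη0 t) hε0.le
      set W : ℝ := (1 - η t * ε) * Real.exp (M t) + η t * ε * Real.exp (lam * M t) with hWdef
      have hW0 : 0 < W := by nlinarith [Real.exp_pos (lam * M t), Real.exp_pos (M t)]
      have hgap : (1 - lam) * c ≤ Real.exp (M t) - Real.exp (lam * M t) := by
        have h1 : (1 - lam) * M t + 1 ≤ Real.exp ((1 - lam) * M t) :=
          Real.add_one_le_exp _
        have h2 : Real.exp (lam * M t) * Real.exp ((1 - lam) * M t) = Real.exp (M t) := by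
          rw [← Real.exp_add]; congr 1; ring
        have h3 : 1 ≤ Real.exp (lam * M t) := Real.one_le_exp (mul_nonneg hlam0 (hM0 t))
        have h4 : (1 - lam) * c ≤ (1 - lam) * M t := mul_le_mul_of_nonneg_left hcM h1lam.le
        nlinarith
      have hWle : W ≤ Real.exp (M t) - η t * ε * ((1 - lam) * c) := by
        have := mul_le_mul_of_nonneg_left hgap hηε0
        nlinarith
      have hlog1 : Real.log W ≤ W * Real.exp (-(M t)) - 1 + M t := by
        have h5 : Real.log (W * Real.exp (-(M t))) ≤ W * Real.exp (-(M t)) - 1 :=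
          Real.log_le_sub_one_of_pos (mul_pos hW0 (Real.exp_pos _))
        have h6 : Real.log (W * Real.exp (-(M t))) = Real.log W + (-(M t)) := by
          rw [Real.log_mul hW0.ne' (Real.exp_ne_zero _), Real.log_exp]
        linarith
      have h9 : Real.exp (M t) * Real.exp (-(M t)) = 1 := by
        rw [← Real.exp_add]; simp
      have h7 : W * Real.exp (-(M t)) ≤ 1 - η t * ε * ((1 - lam) * c) * Real.exp (-(M t)) := by
        have h8 := mul_le_mul_of_nonneg_right hWle (Real.exp_pos (-(M t))).le
        nlinarith [h8, h9]
      have h10 : η t * ρ ≤ η t * ε * ((1 - lam) * c) * Real.exp (-(M t)) := by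
        have h11 : ε ≤ Real.exp (-(M t)) := by
          rw [hεdef]
          exact Real.exp_le_exp.2 (by linarith [hM2K t])
        have h12 : 0 ≤ η t * ε * ((1 - lam) * c) :=
          mul_nonneg hηε0 (mul_nonneg h1lam.le hcp.le)
        calc η t * ρ = η t * ε * ((1 - lam) * c) * ε := by rw [hρdef]; ring
        _ ≤ η t * ε * ((1 - lam) * c) * Real.exp (-(M t)) :=
            mul_le_mul_of_nonneg_left h11 h12
      calc M (t+1) ≤ Real.log W := hstep t
      _ ≤ W * Real.exp (-(M t)) - 1 + M t := hlog1
      _ ≤ M t - η t * ρ := by linarith [h7, h10]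
    have hsum : ∀ T, M T ≤ M 0 - ρ * ∑ i ∈ Finset.range T, η i := by
      intro T
      induction T with
      | zero => simp
      | succ T ih =>
        rw [Finset.sum_range_succ]
        have h1 := hdec T
        nlinarith [h1, ih]
    have hdivg : Tendsto (fun T => ∑ i ∈ Finset.range T, η i) atTop atTop :=
      (not_summable_iff_tendsto_nat_atTop_of_nonneg hη0).1 hdiv
    obtain ⟨T, hT⟩ := (hdivg.eventually (eventually_ge_atTop (M 0 / ρ))).exists
    have h13 := hsum T
    have h14 : M 0 ≤ ρ * ∑ i ∈ Finset.range T, η i := by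
      calc M 0 = ρ * (M 0 / ρ) := by field_simp
      _ ≤ ρ * ∑ i ∈ Finset.range T, η i := mul_le_mul_of_nonneg_left hT hρ0.le
    have hcM := ciInf_le hbb T
    linarith
  have htend0 : Tendsto M atTop (nhds 0) := hceq ▸ htend
  have h2M : Tendsto (fun t => 2 * M t) atTop (nhds 0) := by
    simpa using htend0.const_mul (2:ℝ)
  have hfinal : Tendsto (fun t => A t + Bv t) atTop (nhds 0) := by
    refine squeeze_zero (fun t => add_nonneg (hA0 t) (hB0 t)) (fun t => ?_) h2M
    have h1 : A t ≤ M t := le_max_left _ _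
    have h2 : Bv t ≤ M t := le_max_right _ _
    linarith
  exact hfinal
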